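/- arXiv:2502.16997 — 2 statements merged into one kernel-verified Lean document; each statement's English description precedes it below -/
import Mathlib

section
/- For every set 𝒜 of subsets of a finite nonempty set I, one has Γ_𝒜 = [𝒜]: the set of subsets B ⊆ I all of whose dissociations are contested by some member of 𝒜 is exactly the integral connectivity structure generated by 𝒜. -/
universe u

variable {I : Type u}

/-- `{J₁, J₂}` is a dissociation of `J ⊆ I`: an (unordered) pair of nonempty
disjoint subsets whose union is `J`. -/
def IsDissociation (J J1 J2 : Set I) : Prop :=
  J1.Nonempty ∧ J2.Nonempty ∧ Disjoint J1 J2 ∧ J1 ∪ J2 = J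

/-- `A` contests the dissociation `{J₁, J₂}`. -/
def Contests (A J1 J2 : Set I) : Prop :=
  A ⊆ J1 ∪ J2 ∧ (A ∩ J1).Nonempty ∧ (A ∩ J2).Nonempty

/-- An integral connectivity structure on `I`. -/
def IsConnectivity (𝒦 : Set (Set I)) : Prop :=
  ∅ ∈ 𝒦 ∧ (∀ i : I, ({i} : Set I) ∈ 𝒦) ∧
    ∀ K L : Set I, K ∈ 𝒦 → L ∈ 𝒦 → (K ∩ L).Nonempty → K ∪ L ∈ 𝒦

/-- The integral connectivity structure generated by `𝒜`. -/
def generated (𝒜 : Set (Set I)) : Set (Set I) :=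
  ⋂₀ {𝒦 : Set (Set I) | IsConnectivity 𝒦 ∧ 𝒜 ⊆ 𝒦}

/-- The set `𝒦̃` of irreducible members of `𝒦` with at least two elements. -/
def irred (𝒦 : Set (Set I)) : Set (Set I) :=
  {K | K ∈ 𝒦 ∧ K ∉ generated (𝒦 \ {K}) ∧ 2 ≤ K.ncard}

/-- The sum of two integral connectivity structures: `𝒦₁ ⊕ 𝒦₂ = [𝒦₁ ∪ 𝒦₂]`. -/
def csum (𝒦₁ 𝒦₂ : Set (Set I)) : Set (Set I) := generated (𝒦₁ ∪ 𝒦₂)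

/-- The discrete integral connectivity structure on `I`. -/
def discreteStructure (I : Type u) : Set (Set I) :=
  {(∅ : Set I)} ∪ {A : Set I | ∃ i : I, A = {i}}

/-- `C` is a connected component of `(I, 𝒦)`: a maximal member of `𝒦`. -/
def IsComponent (𝒦 : Set (Set I)) (C : Set I) : Prop :=
  C ∈ 𝒦 ∧ ∀ K ∈ 𝒦, C ⊆ K → K = C

/-- `Γ_𝒜`: subsets of `I` all of whose dissociations are contested by a member of `𝒜`. -/
def Gamma (𝒜 : Set (Set I)) : Set (Set I) :=
  {B | ∀ J1 J2 : Set I, IsDissociation B J1 J2 → ∃ A ∈ 𝒜, Contests A J1 J2}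

/-- A random family on `I`: a finite probability space together with finitely
valued random variables indexed by `I`. -/
structure RandomFamily (I : Type u) where
  Ω : Type
  [fintΩ : Fintype Ω]
  P : Ω → ℝ
  P_nonneg : ∀ ω, 0 ≤ P ω
  P_total : ∑ ω, P ω = 1
  R : I → Type
  [fintR : ∀ i, Fintype (R i)]
  X : ∀ i, Ω → R i

attribute [instance] RandomFamily.fintΩ RandomFamily.fintR

/-- Probability of an event. -/
noncomputable def RandomFamily.prob (φ : RandomFamily I) (E : Set φ.Ω) : ℝ :=
  ∑ ω, E.indicator φ.P ω

/-- `P(X_J = x_J)`. -/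
noncomputable def RandomFamily.probEq (φ : RandomFamily I) (J : Set I)
    (x : ∀ i, φ.R i) : ℝ :=
  φ.prob {ω | ∀ j ∈ J, φ.X j ω = x j}

/-- `φ` respects the dissociation `{J₁, J₂}`:
`P(X_{J₁∪J₂} = x) = P(X_{J₁} = x) · P(X_{J₂} = x)` for all tuples of values. -/
def RandomFamily.Respects (φ : RandomFamily I) (J1 J2 : Set I) : Prop :=
  ∀ x : ∀ i, φ.R i, φ.probEq (J1 ∪ J2) x = φ.probEq J1 x * φ.probEq J2 x

/-- The connectivity structure `K_φ` of a random family: the subsets `J ⊆ I`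
such that `φ` contests every dissociation of `J`. -/
def RandomFamily.Kconn (φ : RandomFamily I) : Set (Set I) :=
  {J | ∀ J1 J2 : Set I, IsDissociation J J1 J2 → ¬ φ.Respects J1 J2}

/-- Tensor product of two random families. -/
noncomputable def RandomFamily.tensor (φ ψ : RandomFamily I) : RandomFamily I where
  Ω := φ.Ω × ψ.Ω
  fintΩ := inferInstance
  P := fun p => φ.P p.1 * ψ.P p.2
  P_nonneg := fun p => mul_nonneg (φ.P_nonneg _) (ψ.P_nonneg _)
  P_total := by
    rw [Fintype.sum_prod_type]
    simp only [← Finset.mul_sum]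
    rw [ψ.P_total]
    simp only [mul_one]
    exact φ.P_total
  R := fun i => φ.R i × ψ.R i
  fintR := fun i => inferInstance
  X := fun i p => (φ.X i p.1, ψ.X i p.2)

/-- Restriction of a random family to a subset `J ⊆ I`. -/
def RandomFamily.restrict (φ : RandomFamily I) (J : Set I) : RandomFamily J where
  Ω := φ.Ω
  fintΩ := inferInstance
  P := φ.P
  P_nonneg := φ.P_nonneg
  P_total := φ.P_total
  R := fun j => φ.R (j : I)
  fintR := fun j => inferInstance
  X := fun j => φ.X (j : I)

/-- The canonical `M`-brunnian family on `I`, for `M` of cardinality `m`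
(with elements listed in increasing order). -/
noncomputable def brunnian [LinearOrder I] (M : Finset I) (m : ℕ) (h : M.card = m) :
    RandomFamily I where
  Ω := Fin (m - 1) → ZMod 2
  fintΩ := inferInstance
  P := fun _ => ((2 : ℝ) ^ (m - 1))⁻¹
  P_nonneg := fun _ => by positivity
  P_total := by
    have hcard : Fintype.card (Fin (m - 1) → ZMod 2) = 2 ^ (m - 1) := by
      rw [Fintype.card_fun]
      simp
    rw [Finset.sum_const, Finset.card_univ, hcard, nsmul_eq_mul]
    push_cast
    exact mul_inv_cancel₀ (by positivity)
  R := fun _ => ZMod 2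
  fintR := fun _ => inferInstance
  X := fun i ω =>
    if hi : i ∈ M then
      if hk : (((M.orderIsoOfFin h).symm ⟨i, hi⟩ : Fin m) : ℕ) < m - 1 then
        ω ⟨_, hk⟩
      else ∑ j, ω j
    else 0
lemma isConnectivity_generated (𝒜 : Set (Set I)) : IsConnectivity (generated 𝒜) := by
  refine ⟨?_, ?_, ?_⟩
  · intro 𝒦 h𝒦; exact h𝒦.1.1
  · intro i 𝒦 h𝒦; exact h𝒦.1.2.1 i
  · intro K L hK hL hKL 𝒦 h𝒦
    exact h𝒦.1.2.2 K L (hK 𝒦 h𝒦) (hL 𝒦 h𝒦) hKL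

lemma subset_generated (𝒜 : Set (Set I)) : 𝒜 ⊆ generated 𝒜 := by
  intro A hA 𝒦 h𝒦; exact h𝒦.2 hA

lemma isConnectivity_gamma (𝒜 : Set (Set I)) : IsConnectivity (Gamma 𝒜) := by
  refine ⟨?_, ?_, ?_⟩
  · rintro J1 J2 ⟨⟨x, hx⟩, -, -, hu⟩
    exact absurd (hu ▸ (Set.mem_union_left J2 hx)) (Set.notMem_empty x)
  · rintro i J1 J2 ⟨⟨x, hx⟩, ⟨y, hy⟩, hd, hu⟩
    exfalso
    have hx' : x ∈ ({i} : Set I) := hu ▸ Set.mem_union_left J2 hx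
    have hy' : y ∈ ({i} : Set I) := hu ▸ Set.mem_union_right J1 hy
    rw [Set.mem_singleton_iff] at hx' hy'
    exact Set.disjoint_left.1 hd hx (hx'.trans hy'.symm ▸ hy)
  · rintro K L hK hL ⟨z, hzK, hzL⟩ J1 J2 ⟨h1, h2, hd, hu⟩
    by_cases hK1 : (K ∩ J1).Nonempty
    · by_cases hK2 : (K ∩ J2).Nonempty
      · -- {K∩J1, K∩J2} is a dissociation of K
        have hdis : IsDissociation K (K ∩ J1) (K ∩ J2) := by
          refine ⟨hK1, hK2, hd.mono Set.inter_subset_right Set.inter_subset_right, ?_⟩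
          rw [← Set.inter_union_distrib_left, hu]
          exact Set.inter_eq_left.2 Set.subset_union_left
        obtain ⟨A, hA, hAs, hA1, hA2⟩ := hK _ _ hdis
        refine ⟨A, hA, hAs.trans (Set.union_subset_union Set.inter_subset_right
          Set.inter_subset_right), ?_, ?_⟩
        · exact hA1.mono (Set.inter_subset_inter_right A Set.inter_subset_right)
        · exact hA2.mono (Set.inter_subset_inter_right A Set.inter_subset_right)
      · -- K ⊆ J1; now consider L
        have hKsub : K ⊆ J1 := by
          intro x hxK
          rcases (hu ▸ Set.mem_union_left L hxK : x ∈ J1 ∪ J2) with h | h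
          · exact h
          · exact absurd ⟨x, hxK, h⟩ hK2
        by_cases hL2 : (L ∩ J2).Nonempty
        · by_cases hL1 : (L ∩ J1).Nonempty
          · have hdis : IsDissociation L (L ∩ J1) (L ∩ J2) := by
              refine ⟨hL1, hL2, hd.mono Set.inter_subset_right Set.inter_subset_right, ?_⟩
              rw [← Set.inter_union_distrib_left, hu]
              exact Set.inter_eq_left.2 Set.subset_union_right
            obtain ⟨A, hA, hAs, hA1, hA2⟩ := hL _ _ hdis
            refine ⟨A, hA, hAs.trans (Set.union_subset_union Set.inter_subset_right
              Set.inter_subset_right), ?_, ?_⟩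
            · exact hA1.mono (Set.inter_subset_inter_right A Set.inter_subset_right)
            · exact hA2.mono (Set.inter_subset_inter_right A Set.inter_subset_right)
          · -- L ⊆ J2 while K ⊆ J1: contradiction via z ∈ K ∩ L
            exfalso
            have hLsub : L ⊆ J2 := by
              intro x hxL
              rcases (hu ▸ Set.mem_union_right K hxL : x ∈ J1 ∪ J2) with h | h
              · exact absurd ⟨x, hxL, h⟩ hL1
              · exact h
            exact Set.disjoint_left.1 hd (hKsub hzK) (hLsub hzL)
        · -- L ⊆ J1 too; J2 = ∅, contradiction
          exfalso
          have hLsub : L ⊆ J1 := by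
            intro x hxL
            rcases (hu ▸ Set.mem_union_right K hxL : x ∈ J1 ∪ J2) with h | h
            · exact h
            · exact absurd ⟨x, hxL, h⟩ hL2
          obtain ⟨y, hy⟩ := h2
          rcases (hu.symm ▸ Set.mem_union_right J1 hy : y ∈ K ∪ L) with h | h
          · exact Set.disjoint_left.1 hd (hKsub h) hy
          · exact Set.disjoint_left.1 hd (hLsub h) hy
    · -- K ⊆ J2; symmetric; swap roles of J1 and J2
      have hKsub : K ⊆ J2 := by
        intro x hxK
        rcases (hu ▸ Set.mem_union_left L hxK : x ∈ J1 ∪ J2) with h | h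
        · exact absurd ⟨x, hxK, h⟩ hK1
        · exact h
      by_cases hL1 : (L ∩ J1).Nonempty
      · by_cases hL2 : (L ∩ J2).Nonempty
        · have hdis : IsDissociation L (L ∩ J1) (L ∩ J2) := by
            refine ⟨hL1, hL2, hd.mono Set.inter_subset_right Set.inter_subset_right, ?_⟩
            rw [← Set.inter_union_distrib_left, hu]
            exact Set.inter_eq_left.2 Set.subset_union_right
          obtain ⟨A, hA, hAs, hA1, hA2⟩ := hL _ _ hdis
          refine ⟨A, hA, hAs.trans (Set.union_subset_union Set.inter_subset_right
            Set.inter_subset_right), ?_, ?_⟩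
          · exact hA1.mono (Set.inter_subset_inter_right A Set.inter_subset_right)
          · exact hA2.mono (Set.inter_subset_inter_right A Set.inter_subset_right)
        · -- L ⊆ J1 while K ⊆ J2: contradiction via z ∈ K ∩ L
          exfalso
          have hLsub : L ⊆ J1 := by
            intro x hxL
            rcases (hu ▸ Set.mem_union_right K hxL : x ∈ J1 ∪ J2) with h | h
            · exact h
            · exact absurd ⟨x, hxL, h⟩ hL2
          exact Set.disjoint_left.1 hd (hLsub hzL) (hKsub hzK)
      · exfalso
        have hLsub : L ⊆ J2 := by
          intro x hxL
          rcases (hu ▸ Set.mem_union_right K hxL : x ∈ J1 ∪ J2) with h | h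
          · exact absurd ⟨x, hxL, h⟩ hL1
          · exact h
        obtain ⟨y, hy⟩ := h1
        rcases (hu.symm ▸ Set.mem_union_left J2 hy : y ∈ K ∪ L) with h | h
        · exact Set.disjoint_left.1 hd hy (hKsub h)
        · exact Set.disjoint_left.1 hd hy (hLsub h)

lemma subset_gamma (𝒜 : Set (Set I)) : 𝒜 ⊆ Gamma 𝒜 := by
  rintro A hA J1 J2 ⟨h1, h2, hd, hu⟩
  subst hu
  exact ⟨_, hA, Set.Subset.rfl,
    h1.mono (Set.subset_inter Set.subset_union_left (subset_refl J1)),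
    h2.mono (Set.subset_inter Set.subset_union_right (subset_refl J2))⟩

/-- for every set `𝒜` of subsets of a finite nonempty set `I`,
`Γ_𝒜 = [𝒜]`, the integral connectivity structure generated by `𝒜`. -/
theorem stmt4 {I : Type u} [Fintype I] [Nonempty I] (𝒜 : Set (Set I)) :
    Gamma 𝒜 = generated 𝒜 := by
  apply Set.Subset.antisymm
  · -- Gamma ⊆ generated
    intro B hB
    rcases Set.eq_empty_or_nonempty B with rfl | hBne
    · exact (isConnectivity_generated 𝒜).1
    · obtain ⟨b, hb⟩ := hBne
      set S : Set (Set I) := {K | K ∈ generated 𝒜 ∧ K ⊆ B ∧ K.Nonempty} with hS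
      have hSne : S.Nonempty :=
        ⟨{b}, (isConnectivity_generated 𝒜).2.1 b, Set.singleton_subset_iff.2 hb,
          Set.singleton_nonempty b⟩
      obtain ⟨M, hMS, hMmax⟩ := Set.Finite.exists_maximalFor id S (Set.toFinite S) hSne
      obtain ⟨hMgen, hMB, hMne⟩ := hMS
      by_cases hMeq : B ⊆ M
      · rw [show B = M from Set.Subset.antisymm hMeq hMB]; exact hMgen
      · exfalso
        have hdiff : (B \ M).Nonempty := Set.nonempty_of_ssubset ⟨hMB, hMeq⟩
        have hdis : IsDissociation B M (B \ M) :=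
          ⟨hMne, hdiff, Set.disjoint_sdiff_right, Set.union_diff_cancel hMB⟩
        obtain ⟨A, hA, hAs, hA1, hA2⟩ := hB _ _ hdis
        have hAB : A ⊆ B := hAs.trans (by rw [Set.union_diff_cancel hMB])
        have hAM : A ∪ M ∈ S := by
          refine ⟨(isConnectivity_generated 𝒜).2.2 A M (subset_generated 𝒜 hA) hMgen hA1,
            Set.union_subset hAB hMB, hMne.mono Set.subset_union_right⟩
        have heq : id M = id (A ∪ M) :=
          Set.Subset.antisymm Set.subset_union_right (hMmax hAM (Set.subset_union_right : M ⊆ A ∪ M))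
        simp only [id] at heq
        obtain ⟨x, hxA, hxB, hxM⟩ := hA2
        have hx : x ∈ A ∪ M := Set.mem_union_left M hxA
        rw [← heq] at hx
        exact hxM hx
  · -- generated ⊆ Gamma
    exact Set.sInter_subset_of_mem ⟨isConnectivity_gamma 𝒜, subset_gamma 𝒜⟩
end

section
/- Let φ be a random family on a finite nonempty set I. For every global dissociation σ of I, φ respects σ if and only if K_φ respects σ (i.e. σ is adapted to the connected components of K_φ). Consequently, the random vectors X_{C₁}, …, X_{C_p} indexed by the connected components C₁, …, C_p of (I, K_φ) are mutually independent: for all values x_I, P(X_I = x_I) = ∏_{k=1}^{p} P(X_{C_k} = x_{C_k}). -/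
universe u

variable {I : Type u}

section Aux

open Classical

variable {I : Type u} [Fintype I]

noncomputable instance (φ : RandomFamily I) (A : Set I) : Fintype (∀ i : A, φ.R i) :=
  Fintype.ofFinite _

/-- Patch the tuple `x` on the set `A` by the assignment `a`. -/
noncomputable def patchFn {R : I → Type} (A : Set I) (a : ∀ i : A, R i) (x : ∀ i, R i) :
    ∀ i, R i :=
  fun i => if h : i ∈ A then a ⟨i, h⟩ else x i

lemma patchFn_mem {R : I → Type} {A : Set I} (a : ∀ i : A, R i) (x : ∀ i, R i)
    {i : I} (h : i ∈ A) : patchFn A a x i = a ⟨i, h⟩ := dif_pos h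

lemma patchFn_not_mem {R : I → Type} {A : Set I} (a : ∀ i : A, R i) (x : ∀ i, R i)
    {i : I} (h : i ∉ A) : patchFn A a x i = x i := dif_neg h

lemma probEq_congr (φ : RandomFamily I) {S : Set I} {x y : ∀ i, φ.R i}
    (h : ∀ j ∈ S, x j = y j) : φ.probEq S x = φ.probEq S y := by
  unfold RandomFamily.probEq
  congr 1
  ext ω
  exact forall₂_congr fun j hj => by rw [h j hj]

lemma probEq_empty (φ : RandomFamily I) (x : ∀ i, φ.R i) : φ.probEq ∅ x = 1 := by
  unfold RandomFamily.probEq RandomFamily.prob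
  have h : {ω | ∀ j ∈ (∅ : Set I), φ.X j ω = x j} = Set.univ := by
    ext ω; simp
  rw [h]
  simp only [Set.indicator_univ]
  exact φ.P_total

/-- Grouping lemma: the event `X_{A'} = x` is the disjoint union over assignments
`a` on `A ⊇ A'` compatible with `x` of the events `X_A = a`. -/
lemma probEq_group (φ : RandomFamily I) {A' A J : Set I} (hA : A' ⊆ A) (hJ : Disjoint A J)
    (x : ∀ i, φ.R i) :
    φ.probEq (A' ∪ J) x =
      ∑ a ∈ Finset.univ.filter
          (fun a : ∀ i : A, φ.R i => ∀ i : A, (i : I) ∈ A' → a i = x (i : I)),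
        φ.probEq (A ∪ J) (patchFn A a x) := by
  unfold RandomFamily.probEq RandomFamily.prob
  rw [Finset.sum_comm]
  refine Finset.sum_congr rfl fun ω _ => ?_
  by_cases hω : ω ∈ {ω | ∀ j ∈ A' ∪ J, φ.X j ω = x j}
  · have hmem : (fun i : A => φ.X (i : I) ω) ∈ Finset.univ.filter
        (fun a : ∀ i : A, φ.R i => ∀ i : A, (i : I) ∈ A' → a i = x (i : I)) := by
      simp only [Finset.mem_filter, Finset.mem_univ, true_and]
      exact fun i hi => hω i (Or.inl hi)
    rw [Set.indicator_of_mem hω, Finset.sum_eq_single_of_mem _ hmem ?_]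
    · rw [Set.indicator_of_mem]
      intro j hj
      by_cases hjA : j ∈ A
      · rw [patchFn_mem _ _ hjA]
      · rcases hj with hjA' | hjJ
        · exact absurd hjA' hjA
        · rw [patchFn_not_mem _ _ hjA]
          exact hω j (Or.inr hjJ)
    · intro a _ hne
      rw [Set.indicator_of_notMem]
      intro hmem'
      apply hne
      funext i
      have h1 := hmem' (i : I) (Or.inl i.2)
      rw [patchFn_mem a x i.2] at h1
      exact h1.symm
  · rw [Set.indicator_of_notMem hω]
    refine (Finset.sum_eq_zero fun a ha => ?_).symm
    rw [Set.indicator_of_notMem]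
    intro hmem'
    apply hω
    intro j hj
    rcases hj with hjA' | hjJ
    · have h1 := hmem' j (Or.inl (hA hjA'))
      rw [patchFn_mem a x (hA hjA')] at h1
      rw [h1]
      exact (Finset.mem_filter.mp ha).2 ⟨j, hA hjA'⟩ hjA'
    · have h1 := hmem' j (Or.inr hjJ)
      rwa [patchFn_not_mem a x (Set.disjoint_right.mp hJ hjJ)] at h1

lemma probEq_sum (φ : RandomFamily I) {A' A : Set I} (hA : A' ⊆ A) (x : ∀ i, φ.R i) :
    φ.probEq A' x =
      ∑ a ∈ Finset.univ.filter
          (fun a : ∀ i : A, φ.R i => ∀ i : A, (i : I) ∈ A' → a i = x (i : I)),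
        φ.probEq A (patchFn A a x) := by
  have h := probEq_group φ (J := ∅) hA (by simp) x
  simpa [Set.union_empty] using h

/-- Marginalization: if `φ` respects `{A, B}` then it respects `{A', B'}` for all
`A' ⊆ A`, `B' ⊆ B`. -/
lemma respects_mono (φ : RandomFamily I) {A B A' B' : Set I} (hd : Disjoint A B)
    (h : φ.Respects A B) (hA : A' ⊆ A) (hB : B' ⊆ B) : φ.Respects A' B' := by
  intro x
  rw [probEq_group φ hA (hd.mono_right hB) x]
  have hterm : ∀ a ∈ Finset.univ.filter
      (fun a : ∀ i : A, φ.R i => ∀ i : A, (i : I) ∈ A' → a i = x (i : I)),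
      φ.probEq (A ∪ B') (patchFn A a x) =
        φ.probEq A (patchFn A a x) *
          ∑ b ∈ Finset.univ.filter
              (fun b : ∀ i : B, φ.R i => ∀ i : B, (i : I) ∈ B' → b i = x (i : I)),
            φ.probEq B (patchFn B b x) := by
    intro a _
    rw [Set.union_comm A B', probEq_group φ hB hd.symm (patchFn A a x)]
    have hy : ∀ i : B, patchFn A a x (i : I) = x (i : I) := fun i =>
      patchFn_not_mem _ _ (Set.disjoint_right.mp hd i.2)
    simp only [hy]
    rw [Finset.mul_sum]
    refine Finset.sum_congr rfl fun b _ => ?_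
    rw [Set.union_comm B A, h (patchFn B b (patchFn A a x))]
    congr 1
    · refine probEq_congr φ fun j hj => ?_
      exact patchFn_not_mem _ _ (Set.disjoint_left.mp hd hj)
    · refine probEq_congr φ fun j hj => ?_
      rw [patchFn_mem b _ hj, patchFn_mem b x hj]
  rw [Finset.sum_congr rfl hterm, ← Finset.sum_mul, ← probEq_sum φ hA x, ← probEq_sum φ hB x]

lemma kconn_sub (φ : RandomFamily I) {M A B : Set I} (hM : M ∈ φ.Kconn)
    (hAB : Disjoint A B) (hresp : φ.Respects A B) (hsub : M ⊆ A ∪ B) :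
    M ⊆ A ∨ M ⊆ B := by
  by_contra hcon
  push_neg at hcon
  obtain ⟨a, haM, haA⟩ := Set.not_subset.mp hcon.1
  obtain ⟨b, hbM, hbB⟩ := Set.not_subset.mp hcon.2
  have haB : a ∈ B := (hsub haM).resolve_left haA
  have hbA : b ∈ A := (hsub hbM).resolve_right hbB
  have hdiss : IsDissociation M (M ∩ A) (M ∩ B) :=
    ⟨⟨b, hbM, hbA⟩, ⟨a, haM, haB⟩, hAB.mono Set.inter_subset_right Set.inter_subset_right,
      by rw [← Set.inter_union_distrib_left, Set.inter_eq_self_of_subset_left hsub]⟩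
  exact hM _ _ hdiss
    (respects_mono φ hAB hresp Set.inter_subset_right Set.inter_subset_right)

lemma kconn_union (φ : RandomFamily I) {K L : Set I} (hK : K ∈ φ.Kconn)
    (hL : L ∈ φ.Kconn) (hKL : (K ∩ L).Nonempty) : K ∪ L ∈ φ.Kconn := by
  intro A B hdiss hresp
  obtain ⟨hAne, hBne, hABd, hABu⟩ := hdiss
  have hKs : K ⊆ A ∨ K ⊆ B := kconn_sub φ hK hABd hresp (hABu ▸ Set.subset_union_left)
  have hLs : L ⊆ A ∨ L ⊆ B := kconn_sub φ hL hABd hresp (hABu ▸ Set.subset_union_right)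
  obtain ⟨z, hzK, hzL⟩ := hKL
  obtain ⟨b, hb⟩ := hBne
  obtain ⟨a, ha⟩ := hAne
  rcases hKs with hKs | hKs <;> rcases hLs with hLs | hLs
  · have hbKL : b ∈ K ∪ L := hABu ▸ Or.inr hb
    exact Set.disjoint_right.mp hABd hb (hbKL.elim (fun h => hKs h) fun h => hLs h)
  · exact Set.disjoint_left.mp hABd (hKs hzK) (hLs hzL)
  · exact Set.disjoint_left.mp hABd (hLs hzL) (hKs hzK)
  · have haKL : a ∈ K ∪ L := hABu ▸ Or.inl ha
    exact Set.disjoint_left.mp hABd ha (haKL.elim (fun h => hKs h) fun h => hLs h)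

lemma exists_component (φ : RandomFamily I) {J : Set I} (hJ : J ∈ φ.Kconn) :
    ∃ C, IsComponent φ.Kconn C ∧ J ⊆ C := by
  obtain ⟨C, hC, hmax⟩ := Set.Finite.exists_maximalFor id {K ∈ φ.Kconn | J ⊆ K}
    (Set.toFinite _) ⟨J, hJ, subset_rfl⟩
  exact ⟨C, ⟨hC.1, fun K hK hCK => subset_antisymm (hmax ⟨hK, hC.2.trans hCK⟩ hCK) hCK⟩, hC.2⟩

lemma components_eq (φ : RandomFamily I) {C C' : Set I} (hC : IsComponent φ.Kconn C)
    (hC' : IsComponent φ.Kconn C') (h : (C ∩ C').Nonempty) : C = C' := by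
  have hu : C ∪ C' ∈ φ.Kconn := kconn_union φ hC.1 hC'.1 h
  have h1 := hC.2 _ hu Set.subset_union_left
  have h2 := hC'.2 _ hu Set.subset_union_right
  exact h1.symm.trans h2

/-- The main factorisation: `P(X_J = x)` factors over the connected components of `K_φ`. -/
lemma probEq_factor (φ : RandomFamily I) (J : Set I) (x : ∀ i, φ.R i) :
    φ.probEq J x =
      ∏ C ∈ (Set.toFinite {C : Set I | IsComponent φ.Kconn C}).toFinset,
        φ.probEq (C ∩ J) x := by
  generalize hn : J.ncard = n
  induction n using Nat.strong_induction_on generalizing J x with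
  | _ n ih =>
    by_cases hJK : J ∈ φ.Kconn
    · obtain ⟨C₀, hC₀, hJC₀⟩ := exists_component φ hJK
      have hC₀mem : C₀ ∈ (Set.toFinite {C : Set I | IsComponent φ.Kconn C}).toFinset :=
        (Set.Finite.mem_toFinset _).mpr hC₀
      rw [Finset.prod_eq_single_of_mem C₀ hC₀mem ?_]
      · rw [Set.inter_eq_self_of_subset_right hJC₀]
      · intro C hC hne
        have hCcomp : IsComponent φ.Kconn C := by rwa [Set.Finite.mem_toFinset] at hC
        have hempty : C ∩ J = ∅ := by
          by_contra hne'
          have hint : (C ∩ C₀).Nonempty := by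
            obtain ⟨z, hz⟩ := Set.nonempty_iff_ne_empty.mpr hne'
            exact ⟨z, hz.1, hJC₀ hz.2⟩
          exact hne (components_eq φ hCcomp hC₀ hint)
        rw [hempty]
        exact probEq_empty φ x
    · have hJK' : ∃ A B : Set I, IsDissociation J A B ∧ φ.Respects A B := by
        simp only [RandomFamily.Kconn, Set.mem_setOf_eq, not_forall] at hJK
        obtain ⟨A, B, hd, hr⟩ := hJK
        exact ⟨A, B, hd, not_not.mp hr⟩
      obtain ⟨A, B, hdiss, hresp⟩ := hJK'
      obtain ⟨hAne, hBne, hABd, hABu⟩ := hdiss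
      have hAJ : A ⊆ J := hABu ▸ Set.subset_union_left
      have hBJ : B ⊆ J := hABu ▸ Set.subset_union_right
      have hAlt : A.ncard < n := by
        rw [← hn]
        refine Set.ncard_lt_ncard ⟨hAJ, fun hJA => ?_⟩ (Set.toFinite J)
        obtain ⟨b, hb⟩ := hBne
        exact Set.disjoint_right.mp hABd hb (hJA (hBJ hb))
      have hBlt : B.ncard < n := by
        rw [← hn]
        refine Set.ncard_lt_ncard ⟨hBJ, fun hJB => ?_⟩ (Set.toFinite J)
        obtain ⟨a, ha⟩ := hAne
        exact Set.disjoint_left.mp hABd ha (hJB (hAJ ha))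
      have hstep : φ.probEq J x = φ.probEq A x * φ.probEq B x := by
        rw [← hABu]; exact hresp x
      rw [hstep, ih _ hAlt A x rfl, ih _ hBlt B x rfl, ← Finset.prod_mul_distrib]
      refine Finset.prod_congr rfl fun C _ => ?_
      have hCJ : C ∩ J = (C ∩ A) ∪ (C ∩ B) := by
        rw [← Set.inter_union_distrib_left, hABu]
      rw [hCJ]
      exact (respects_mono φ hABd hresp Set.inter_subset_right Set.inter_subset_right x).symm

end Aux

/-- a global dissociation of `I` is respected by `φ` iff it is respected
by `K_φ`; consequently the random vectors indexed by the connected components of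
`(I, K_φ)` are mutually independent. -/
theorem stmt11 {I : Type u} [Fintype I] [Nonempty I] (φ : RandomFamily I) :
    (∀ J1 J2 : Set I, IsDissociation (Set.univ : Set I) J1 J2 →
        (φ.Respects J1 J2 ↔ ∀ K ∈ φ.Kconn, ¬ Contests K J1 J2)) ∧
    (∀ x : ∀ i, φ.R i,
        φ.probEq Set.univ x =
          ∏ C ∈ (Set.toFinite {C : Set I | IsComponent φ.Kconn C}).toFinset,
            φ.probEq C x) := by
  classical
  have hfin := Set.toFinite {C : Set I | IsComponent φ.Kconn C}
  refine ⟨?_, ?_⟩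
  · intro J1 J2 hdiss
    obtain ⟨hne1, hne2, hd, hu⟩ := hdiss
    constructor
    · intro hresp K hK hcont
      obtain ⟨hKsub, hK1, hK2⟩ := hcont
      have hdK : IsDissociation K (K ∩ J1) (K ∩ J2) :=
        ⟨hK1, hK2, hd.mono Set.inter_subset_right Set.inter_subset_right,
          by rw [← Set.inter_union_distrib_left, Set.inter_eq_self_of_subset_left hKsub]⟩
      exact hK _ _ hdK
        (respects_mono φ hd hresp Set.inter_subset_right Set.inter_subset_right)
    · intro hno x
      have hcomp : ∀ C ∈ hfin.toFinset, C ⊆ J1 ∨ C ⊆ J2 := by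
        intro C hC
        have hCc : IsComponent φ.Kconn C := by rwa [Set.Finite.mem_toFinset] at hC
        have hnc := hno C hCc.1
        have hCsub : C ⊆ J1 ∪ J2 := hu ▸ Set.subset_univ C
        by_cases h2 : (C ∩ J2).Nonempty
        · right
          intro c hc
          rcases hCsub hc with h | h
          · exact absurd ⟨hCsub, ⟨c, hc, h⟩, h2⟩ hnc
          · exact h
        · left
          intro c hc
          rcases hCsub hc with h | h
          · exact h
          · exact absurd ⟨c, hc, h⟩ h2
      show φ.probEq (J1 ∪ J2) x = _
      rw [hu, probEq_factor φ Set.univ x, probEq_factor φ J1 x, probEq_factor φ J2 x,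
        ← Finset.prod_mul_distrib]
      refine Finset.prod_congr rfl fun C hC => ?_
      rw [Set.inter_univ]
      rcases hcomp C hC with h | h
      · rw [Set.inter_eq_self_of_subset_left h,
          Set.disjoint_iff_inter_eq_empty.mp (hd.mono_left h), probEq_empty, mul_one]
      · rw [Set.inter_eq_self_of_subset_left h,
          Set.disjoint_iff_inter_eq_empty.mp ((hd.symm).mono_left h), probEq_empty, one_mul]
  · intro x
    rw [probEq_factor φ Set.univ x]
    exact Finset.prod_congr rfl fun C _ => by rw [Set.inter_univ]
end
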